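/- Fix α ∈ (2/3, 1). Let μ_∘(m) := p_m/(1 − α) for integers m ≥ 1, and let μ_•(m) := q·(1−q)^m for integers m ≥ 0, where q := 2αp_c/(1 − α + 2αp_c). Then ∑_{m≥1} m·μ_∘(m) = 2αp_c/(1 − α), ∑_{m≥0} m·μ_•(m) = (1 − α)/(2αp_c), and consequently (∑_{m≥1} m·μ_∘(m)) · (∑_{m≥0} m·μ_•(m)) = 1; that is, the two-type offspring distributions are critical. -/

import Mathlib

/-- The peeling probability `p_m` for a hyperbolic half-planar triangulation with
parameter `α`:  `p_m = (2/4^m) ((2m-2)!/((m-1)!(m+1)!)) (2/α - 2)^m ((3α-2)m + 1)`. -/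
noncomputable def peelP (α : ℝ) (m : ℕ) : ℝ :=
  (2 / 4 ^ m) *
    ((Nat.factorial (2 * m - 2) : ℝ) /
      ((Nat.factorial (m - 1) : ℝ) * (Nat.factorial (m + 1) : ℝ))) *
    (2 / α - 2) ^ m * ((3 * α - 2) * m + 1)

/-- The critical site-percolation probability `p_c = (1/2)(1 - √(3 - 2/α))`. -/
noncomputable def pcrit (α : ℝ) : ℝ := (1 / 2) * (1 - Real.sqrt (3 - 2 / α))

/-- The normalising constant `c_α = 2/(1 - √(α(3α-2)))`. -/
noncomputable def cAlpha (α : ℝ) : ℝ := 2 / (1 - Real.sqrt (α * (3 * α - 2)))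

/-- The increment law `μ` of the peeling random walk: `μ(1) = c_α α p_c`,
`μ(-m) = (1/2) c_α p_m` for `m ≥ 1`, and `μ(i) = 0` otherwise. -/
noncomputable def incLaw (α : ℝ) : ℤ → ℝ := fun i =>
  if i = 1 then cAlpha α * α * pcrit α
  else if i ≤ -1 then (1 / 2) * cAlpha α * peelP α (-i).toNat
  else 0

open Finset

/-- The two-type offspring distributions `μ∘(m) = p_m/(1-α)` (for `m ≥ 1`) and
`μ•(m) = q(1-q)^m` (for `m ≥ 0`, with `q = 2αp_c/(1-α+2αp_c)`) satisfy
`∑ m μ∘(m) = 2αp_c/(1-α)`, `∑ m μ•(m) = (1-α)/(2αp_c)`, and the product of the two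
means equals `1` (criticality). -/
private lemma cb_succ_real (n : ℕ) :
    (Nat.centralBinom (n+1) : ℝ) = 4 * Nat.centralBinom n - 2 * catalan n := by
  have h := Nat.succ_mul_centralBinom_succ n
  have h2 := succ_mul_catalan_eq_centralBinom n
  have h' : ((n:ℝ)+1) * Nat.centralBinom (n+1) = 2*(2*n+1) * Nat.centralBinom n := by
    exact_mod_cast h
  have h2' : ((n:ℝ)+1) * catalan n = Nat.centralBinom n := by exact_mod_cast h2
  have hn : ((n:ℝ)+1) ≠ 0 := by positivity
  nlinarith [h', h2']

private lemma sum_catalan_div_pow (N : ℕ) :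
    ∑ n ∈ Finset.range N, (catalan n : ℝ)/4^n = 2 - 2 * Nat.centralBinom N / 4^N := by
  induction N with
  | zero => simp [Nat.centralBinom]
  | succ N ih =>
    rw [Finset.sum_range_succ, ih, cb_succ_real]
    have : (4:ℝ)^N ≠ 0 := by positivity
    field_simp
    ring

private lemma catalan_le_pow (n : ℕ) : (catalan n : ℝ) ≤ 2 * 4 ^ n := by
  have h1 : (catalan n : ℝ)/4^n ≤ ∑ k ∈ range (n+1), (catalan k : ℝ)/4^k :=
    Finset.single_le_sum (f := fun k => (catalan k : ℝ)/4^k)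
      (fun k _ => by positivity) (self_mem_range_succ n)
  have h2 := sum_catalan_div_pow (n+1)
  have h3 : (0:ℝ) ≤ 2 * Nat.centralBinom (n+1) / 4^(n+1) := by positivity
  have h4 : (0:ℝ) < 4 ^ n := by positivity
  rw [div_le_iff₀ h4] at *
  nlinarith [h1, h2, h3]

private lemma summable_cat4 : Summable (fun n => (catalan n : ℝ)/4^n) := by
  apply summable_of_sum_range_le (c := 2) (fun n => by positivity)
  intro N
  rw [sum_catalan_div_pow]
  have : (0:ℝ) ≤ 2 * Nat.centralBinom N / 4^N := by positivity
  linarith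

private lemma tsum_cat4_le : ∑' n, (catalan n : ℝ)/4^n ≤ 2 :=
  Real.tsum_le_of_sum_range_le (fun n => by positivity)
    (fun N => by
      rw [sum_catalan_div_pow]
      have : (0:ℝ) ≤ 2 * Nat.centralBinom N / 4^N := by positivity
      linarith)

private lemma catalan_gf {t : ℝ} (ht0 : 0 < t) (ht : t < 1/4) :
    ∃ F G : ℝ, HasSum (fun n => (catalan n : ℝ) * t ^ n) F ∧
      HasSum (fun n => (Nat.centralBinom n : ℝ) * t ^ n) G ∧
      2 * t * F = 1 - Real.sqrt (1 - 4*t) ∧ G * Real.sqrt (1 - 4*t) = 1 := by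
  have hr0 : (0:ℝ) ≤ 4 * t := by linarith
  have hr1 : 4 * t < 1 := by linarith
  -- summability of the Catalan series
  have hsumF : Summable (fun n => (catalan n : ℝ) * t ^ n) := by
    apply Summable.of_nonneg_of_le (fun n => by positivity) (fun n => ?_)
      ((summable_geometric_of_lt_one hr0 hr1).mul_left 2)
    calc (catalan n : ℝ) * t ^ n ≤ (2 * 4 ^ n) * t ^ n := by
          exact mul_le_mul_of_nonneg_right (catalan_le_pow n) (by positivity)
      _ = 2 * (4*t) ^ n := by rw [mul_pow]; ring
  -- summability of the central binomial series
  have hsumG : Summable (fun n => (Nat.centralBinom n : ℝ) * t ^ n) := by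
    have hs : Summable (fun n : ℕ => ((n:ℝ)+1) * (2 * (4*t) ^ n)) := by
      have h1 : Summable (fun n : ℕ => (n:ℝ) * (4*t) ^ n) := by
        simpa using (hasSum_coe_mul_geometric_of_norm_lt_one
          (𝕜 := ℝ) (r := 4*t) (by rwa [Real.norm_eq_abs, abs_of_nonneg hr0])).summable
      have h2 := summable_geometric_of_lt_one hr0 hr1
      have := (h1.add h2).mul_left 2
      apply this.congr
      intro n; ring
    apply Summable.of_nonneg_of_le (fun n => by positivity) (fun n => ?_) hs
    have hb : (Nat.centralBinom n : ℝ) = ((n:ℝ)+1) * catalan n := by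
      exact_mod_cast (succ_mul_catalan_eq_centralBinom n).symm
    calc (Nat.centralBinom n : ℝ) * t ^ n = ((n:ℝ)+1) * ((catalan n : ℝ) * t ^ n) := by
          rw [hb]; ring
      _ ≤ ((n:ℝ)+1) * (2 * (4*t) ^ n) := by
          apply mul_le_mul_of_nonneg_left _ (by positivity)
          calc (catalan n : ℝ) * t ^ n ≤ (2 * 4 ^ n) * t ^ n :=
                mul_le_mul_of_nonneg_right (catalan_le_pow n) (by positivity)
            _ = 2 * (4*t) ^ n := by rw [mul_pow]; ring
  set F := ∑' n, (catalan n : ℝ) * t ^ n with hFdef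
  set G := ∑' n, (Nat.centralBinom n : ℝ) * t ^ n with hGdef
  have hF : HasSum (fun n => (catalan n : ℝ) * t ^ n) F := hsumF.hasSum
  have hG : HasSum (fun n => (Nat.centralBinom n : ℝ) * t ^ n) G := hsumG.hasSum
  have hnormF : Summable (fun n => ‖(catalan n : ℝ) * t ^ n‖) := by
    apply hsumF.congr
    intro n
    rw [Real.norm_eq_abs, abs_of_nonneg (by positivity)]
  have hnormG : Summable (fun n => ‖(Nat.centralBinom n : ℝ) * t ^ n‖) := by
    apply hsumG.congr
    intro n
    rw [Real.norm_eq_abs, abs_of_nonneg (by positivity)]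
  -- Cauchy product for F * F
  have hFF : F * F = ∑' n, (catalan (n+1) : ℝ) * t ^ n := by
    rw [tsum_mul_tsum_eq_tsum_sum_antidiagonal_of_summable_norm hnormF hnormF]
    apply tsum_congr
    intro n
    have : ∀ p ∈ Finset.HasAntidiagonal.antidiagonal n,
        ((catalan p.1 : ℝ) * t ^ p.1) * ((catalan p.2 : ℝ) * t ^ p.2)
          = ((catalan p.1 : ℝ) * (catalan p.2 : ℝ)) * t ^ n := by
      intro p hp
      rw [Finset.HasAntidiagonal.mem_antidiagonal] at hp
      rw [← hp]
      rw [pow_add]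
      ring
    rw [Finset.sum_congr rfl this, ← Finset.sum_mul]
    congr 1
    rw [catalan_succ' n]
    push_cast
    rfl
  -- shifted sum
  have hshiftF : HasSum (fun n => (catalan (n+1) : ℝ) * t ^ (n+1)) (F - 1) := by
    have := (hasSum_nat_add_iff' (f := fun n => (catalan n : ℝ) * t ^ n) 1).2 hF
    simpa using this
  have key1 : t * (F * F) = F - 1 := by
    rw [hFF, ← tsum_mul_left]
    rw [show (fun n => t * ((catalan (n+1) : ℝ) * t ^ n))
        = (fun n => (catalan (n+1) : ℝ) * t ^ (n+1)) from funext fun n => by ring]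
    exact hshiftF.tsum_eq
  -- the bound F ≤ 1 + 4t
  have hFle : F ≤ 1 + 4 * t := by
    have hs4 := summable_cat4
    have hshift4 : HasSum (fun n => (catalan (n+1) : ℝ)/4^(n+1)) ((∑' n, (catalan n : ℝ)/4^n) - 1) := by
      have := (hasSum_nat_add_iff' (f := fun n => (catalan n : ℝ)/4^n) 1).2 hs4.hasSum
      simpa using this
    have hbound : ∀ n : ℕ, (catalan (n+1) : ℝ) * t ^ (n+1) ≤ (4*t) * ((catalan (n+1) : ℝ)/4^(n+1)) := by
      intro n
      have htp : t ^ n ≤ (1/4) ^ n := pow_le_pow_left₀ ht0.le (by linarith) n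
      have : (catalan (n+1) : ℝ) * t ^ (n+1) = ((catalan (n+1) : ℝ) * t) * t ^ n := by ring
      rw [this]
      have h2 : (4*t) * ((catalan (n+1) : ℝ)/4^(n+1)) = ((catalan (n+1) : ℝ) * t) * (1/4) ^ n := by
        rw [pow_succ, one_div_pow]
        field_simp
      rw [h2]
      exact mul_le_mul_of_nonneg_left htp (by positivity)
    have h1 : F - 1 ≤ (4*t) * ((∑' n, (catalan n : ℝ)/4^n) - 1) := by
      rw [← hshiftF.tsum_eq]
      calc ∑' n, (catalan (n+1) : ℝ) * t ^ (n+1)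
          ≤ ∑' n, (4*t) * ((catalan (n+1) : ℝ)/4^(n+1)) :=
            Summable.tsum_le_tsum hbound hshiftF.summable (hshift4.summable.mul_left _)
        _ = (4*t) * ∑' n, (catalan (n+1) : ℝ)/4^(n+1) := tsum_mul_left
        _ = (4*t) * ((∑' n, (catalan n : ℝ)/4^n) - 1) := by rw [hshift4.tsum_eq]
    have h2 : (∑' n, (catalan n : ℝ)/4^n) - 1 ≤ 1 := by
      have := tsum_cat4_le; linarith
    nlinarith [h1, h2]
  have hlt : 2 * t * F < 1 := by nlinarith [hFle]
  have hsq : (1 - 2*t*F)^2 = 1 - 4*t := by linear_combination 4*t*key1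
  have hσ : Real.sqrt (1 - 4*t) = 1 - 2*t*F := by
    rw [← hsq, Real.sqrt_sq (by linarith)]
  -- Cauchy product for G * F
  have hGF : G * F = ∑' n, ((Nat.centralBinom (n+1) : ℝ)/2) * t ^ n := by
    rw [tsum_mul_tsum_eq_tsum_sum_antidiagonal_of_summable_norm hnormG hnormF]
    apply tsum_congr
    intro n
    have step1 : ∀ p ∈ Finset.HasAntidiagonal.antidiagonal n,
        ((Nat.centralBinom p.1 : ℝ) * t ^ p.1) * ((catalan p.2 : ℝ) * t ^ p.2)
          = ((Nat.centralBinom p.1 : ℝ) * (catalan p.2 : ℝ)) * t ^ n := by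
      intro p hp
      rw [Finset.HasAntidiagonal.mem_antidiagonal] at hp
      rw [← hp, pow_add]
      ring
    rw [Finset.sum_congr rfl step1, ← Finset.sum_mul]
    congr 1
    -- ∑ b_i C_j over antidiagonal = b_{n+1}/2
    have hb : ∀ i : ℕ, (Nat.centralBinom i : ℝ) = ((i:ℝ)+1) * catalan i := by
      intro i
      exact_mod_cast (succ_mul_catalan_eq_centralBinom i).symm
    have hswap := Finset.Nat.sum_antidiagonal_swap
      (n := n) (f := fun p : ℕ × ℕ => ((p.2:ℝ)+1) * (catalan p.1 : ℝ) * (catalan p.2 : ℝ))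
    have hSS : ∑ p ∈ Finset.HasAntidiagonal.antidiagonal n, ((p.1:ℝ)+1) * (catalan p.1 : ℝ) * (catalan p.2 : ℝ)
        = ∑ p ∈ Finset.HasAntidiagonal.antidiagonal n, ((p.2:ℝ)+1) * (catalan p.1 : ℝ) * (catalan p.2 : ℝ) := by
      rw [← hswap]
      apply Finset.sum_congr rfl
      intro p hp
      simp only [Prod.fst_swap, Prod.snd_swap]
      ring
    have h1 : ∀ p ∈ Finset.HasAntidiagonal.antidiagonal n, (Nat.centralBinom p.1 : ℝ) * (catalan p.2 : ℝ)
        = ((p.1:ℝ)+1) * (catalan p.1 : ℝ) * (catalan p.2 : ℝ) := by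
      intro p _
      rw [hb p.1]
    have hsum2 : (2:ℝ) * ∑ p ∈ Finset.HasAntidiagonal.antidiagonal n, (Nat.centralBinom p.1 : ℝ) * (catalan p.2 : ℝ)
        = ((n:ℝ)+2) * ∑ p ∈ Finset.HasAntidiagonal.antidiagonal n, (catalan p.1 : ℝ) * (catalan p.2 : ℝ) := by
      calc (2:ℝ) * ∑ p ∈ Finset.HasAntidiagonal.antidiagonal n, (Nat.centralBinom p.1 : ℝ) * (catalan p.2 : ℝ)
          = (∑ p ∈ Finset.HasAntidiagonal.antidiagonal n, ((p.1:ℝ)+1) * (catalan p.1 : ℝ) * (catalan p.2 : ℝ))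
            + ∑ p ∈ Finset.HasAntidiagonal.antidiagonal n, ((p.1:ℝ)+1) * (catalan p.1 : ℝ) * (catalan p.2 : ℝ) := by
            rw [Finset.sum_congr rfl h1]; ring
        _ = (∑ p ∈ Finset.HasAntidiagonal.antidiagonal n, ((p.1:ℝ)+1) * (catalan p.1 : ℝ) * (catalan p.2 : ℝ))
            + ∑ p ∈ Finset.HasAntidiagonal.antidiagonal n, ((p.2:ℝ)+1) * (catalan p.1 : ℝ) * (catalan p.2 : ℝ) := by
            rw [hSS]
        _ = ∑ p ∈ Finset.HasAntidiagonal.antidiagonal n,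
              ((((p.1:ℝ)+1) + ((p.2:ℝ)+1)) * ((catalan p.1 : ℝ) * (catalan p.2 : ℝ))) := by
            rw [← Finset.sum_add_distrib]
            apply Finset.sum_congr rfl
            intro p _
            ring
        _ = ∑ p ∈ Finset.HasAntidiagonal.antidiagonal n, (((n:ℝ)+2) * ((catalan p.1 : ℝ) * (catalan p.2 : ℝ))) := by
            apply Finset.sum_congr rfl
            intro p hp
            rw [Finset.HasAntidiagonal.mem_antidiagonal] at hp
            have hpn : ((p.1:ℝ) + (p.2:ℝ)) = n := by exact_mod_cast hp
            rw [show ((p.1:ℝ)+1) + ((p.2:ℝ)+1) = ((p.1:ℝ)+(p.2:ℝ)) + 2 by ring, hpn]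
        _ = ((n:ℝ)+2) * ∑ p ∈ Finset.HasAntidiagonal.antidiagonal n, (catalan p.1 : ℝ) * (catalan p.2 : ℝ) := by
            rw [Finset.mul_sum]
    have hcb : (Nat.centralBinom (n+1) : ℝ) = ((n:ℝ)+2) * catalan (n+1) := by
      have h := succ_mul_catalan_eq_centralBinom (n+1)
      have h' : ((n:ℝ)+1+1) * catalan (n+1) = Nat.centralBinom (n+1) := by exact_mod_cast h
      linarith
    have hcs : ((catalan (n+1) : ℝ))
        = ∑ p ∈ Finset.HasAntidiagonal.antidiagonal n, (catalan p.1 : ℝ) * (catalan p.2 : ℝ) := by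
      rw [catalan_succ' n]
      push_cast
      rfl
    rw [eq_div_iff (two_ne_zero : (2:ℝ) ≠ 0), hcb, hcs]
    linarith [hsum2]
  have hGshift : HasSum (fun n => (Nat.centralBinom (n+1) : ℝ) * t ^ (n+1)) (G - 1) := by
    have := (hasSum_nat_add_iff' (f := fun n => (Nat.centralBinom n : ℝ) * t ^ n) 1).2 hG
    simpa [Nat.centralBinom] using this
  have key2 : 2 * t * (G * F) = G - 1 := by
    rw [hGF, ← tsum_mul_left]
    rw [show (fun n => 2 * t * (((Nat.centralBinom (n+1) : ℝ)/2) * t ^ n))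
        = (fun n => (Nat.centralBinom (n+1) : ℝ) * t ^ (n+1)) from funext fun n => by ring]
    exact hGshift.tsum_eq
  refine ⟨F, G, hF, hG, by linarith [hσ], ?_⟩
  rw [hσ]
  linear_combination -key2

private lemma peel_term_eq (α : ℝ) (hα : α ∈ Set.Ioo (2/3 : ℝ) 1) (m : ℕ) :
    ((m + 1 : ℕ) : ℝ) * peelP α (m+1)
      = 2*(3*α-2)*((1-α)/(2*α)) * ((Nat.centralBinom m : ℝ) * ((1-α)/(2*α))^m)
        + 2*(1-α)*((1-α)/(2*α)) * ((catalan m : ℝ) * ((1-α)/(2*α))^m)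
        + (1-α) * ((catalan (m+1) : ℝ) * ((1-α)/(2*α))^(m+1)) := by
  obtain ⟨h23, h1⟩ := hα
  have hα0 : α ≠ 0 := by positivity
  set t : ℝ := (1-α)/(2*α) with htdef
  have hx : 2/α - 2 = 4*t := by
    rw [htdef]; field_simp; ring
  have e1 : 2*(m+1)-2 = 2*m := by omega
  have e2 : (m+1)-1 = m := by omega
  have e3 : (m+1)+1 = m+2 := by omega
  have hfact : ((2*m).factorial : ℝ) = (Nat.centralBinom m) * m.factorial * m.factorial := by
    have := Nat.choose_mul_factorial_mul_factorial (Nat.le_mul_of_pos_left m (by norm_num : 0 < 2))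
    have h2 : 2*m - m = m := by omega
    rw [h2] at this
    rw [← this, Nat.centralBinom]
    push_cast
    ring
  have hfact2 : ((m+2).factorial : ℝ) = ((m:ℝ)+2) * (((m:ℝ)+1) * m.factorial) := by
    rw [show (m+2) = (m+1)+1 by omega, Nat.factorial_succ, Nat.factorial_succ]
    push_cast
    ring
  have hb : (Nat.centralBinom m : ℝ) = ((m:ℝ)+1) * catalan m := by
    exact_mod_cast (succ_mul_catalan_eq_centralBinom m).symm
  have hc : (catalan (m+1) : ℝ) = (4 * Nat.centralBinom m - 2 * catalan m)/((m:ℝ)+2) := by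
    have h := succ_mul_catalan_eq_centralBinom (m+1)
    have h' : ((m:ℝ)+1+1) * catalan (m+1) = Nat.centralBinom (m+1) := by exact_mod_cast h
    rw [cb_succ_real m] at h'
    rw [eq_div_iff (by positivity : ((m:ℝ)+2) ≠ 0)]
    linarith
  simp only [peelP, e1, e2, e3]
  rw [hx, mul_pow, hfact, hfact2, hc, hb]
  have hm2 : ((m:ℝ)+2) ≠ 0 := by positivity
  have hm1 : ((m:ℝ)+1) ≠ 0 := by positivity
  have hf0 : (m.factorial : ℝ) ≠ 0 := by positivity
  have h4 : ((4:ℝ)^(m+1)) ≠ 0 := by positivity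
  field_simp
  push_cast
  ring

theorem two_type_offspring_critical (α : ℝ) (hα : α ∈ Set.Ioo (2 / 3 : ℝ) 1) :
    let q : ℝ := 2 * α * pcrit α / (1 - α + 2 * α * pcrit α)
    HasSum (fun m : ℕ => ((m + 1 : ℕ) : ℝ) * (peelP α (m + 1) / (1 - α)))
      (2 * α * pcrit α / (1 - α)) ∧
    HasSum (fun m : ℕ => (m : ℝ) * (q * (1 - q) ^ m)) ((1 - α) / (2 * α * pcrit α)) ∧
    (∑' m : ℕ, ((m + 1 : ℕ) : ℝ) * (peelP α (m + 1) / (1 - α))) *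
      (∑' m : ℕ, (m : ℝ) * (q * (1 - q) ^ m)) = 1 := by
  obtain ⟨h23, h1⟩ := hα
  have hα0 : (0:ℝ) < α := by linarith
  intro q
  set t : ℝ := (1-α)/(2*α) with htdef
  have ht0 : 0 < t := div_pos (by linarith) (by linarith)
  have ht4 : t < 1/4 := by
    rw [htdef, div_lt_iff₀ (by linarith : (0:ℝ) < 2*α)]
    linarith
  obtain ⟨F, G, hF, hG, hFσ, hGσ⟩ := catalan_gf ht0 ht4
  have hst : 1 - 4*t = 3 - 2/α := by
    rw [htdef]
    field_simp
    ring
  have hσeq : Real.sqrt (1 - 4*t) = Real.sqrt (3 - 2/α) := by rw [hst]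
  set σ : ℝ := Real.sqrt (3 - 2/α) with hσdef
  rw [hσeq] at hFσ hGσ
  have h32pos : (0:ℝ) < 3 - 2/α := by rw [← hst]; linarith
  have hσ0 : 0 < σ := Real.sqrt_pos.2 h32pos
  have hsq : σ^2 = 3 - 2/α := Real.sq_sqrt h32pos.le
  have h32lt : 3 - 2/α < 1 := by
    have : 2 < 2/α := by
      rw [lt_div_iff₀ hα0]
      linarith
    linarith
  have hσlt : σ < 1 := by nlinarith [hsq, hσ0]
  have hpc : pcrit α = (1-σ)/2 := by rw [pcrit]; ring
  have hpc0 : 0 < pcrit α := by rw [hpc]; linarith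
  have h1α : (0:ℝ) < 1 - α := by linarith
  -- part 1
  have hshiftF : HasSum (fun m => (catalan (m+1) : ℝ) * t^(m+1)) (F - 1) := by
    have := (hasSum_nat_add_iff' (f := fun n => (catalan n : ℝ) * t ^ n) 1).2 hF
    simpa using this
  have hcomb := ((hG.mul_left (2*(3*α-2)*t)).add (hF.mul_left (2*(1-α)*t))).add
      (hshiftF.mul_left (1-α))
  have hGv : G = 1/σ := by
    rw [eq_div_iff hσ0.ne']
    exact hGσ
  have hFv : F = α*(1-σ)/(1-α) := by
    rw [htdef] at hFσ
    rw [eq_div_iff h1α.ne']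
    field_simp at hFσ
    linarith
  have hsum1 : HasSum (fun m : ℕ => ((m + 1 : ℕ) : ℝ) * peelP α (m+1)) (2*α*pcrit α) := by
    have heq : (fun m : ℕ => ((m + 1 : ℕ) : ℝ) * peelP α (m+1))
        = fun m => 2*(3*α-2)*t * ((Nat.centralBinom m : ℝ) * t^m)
            + 2*(1-α)*t * ((catalan m : ℝ) * t^m)
            + (1-α) * ((catalan (m+1) : ℝ) * t^(m+1)) := by
      funext m
      rw [htdef]
      exact peel_term_eq α ⟨h23, h1⟩ m
    rw [heq]
    rw [show (2*α*pcrit α) = 2*(3*α-2)*t*G + 2*(1-α)*t*F + (1-α)*(F-1) from ?_]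
    · exact hcomb
    rw [hpc, hGv, hFv, htdef]
    have hσsq : α * σ^2 = 3*α - 2 := by
      rw [hsq]
      field_simp
    field_simp
    linear_combination (1 - α) * hσsq
  have part1 : HasSum (fun m : ℕ => ((m + 1 : ℕ) : ℝ) * (peelP α (m + 1) / (1 - α)))
      (2 * α * pcrit α / (1 - α)) := by
    simpa [mul_div_assoc] using hsum1.div_const (1-α)
  -- part 2
  have hA : (0:ℝ) < 2 * α * pcrit α := by positivity
  have hAB : (0:ℝ) < 1 - α + 2 * α * pcrit α := by linarith
  have hqv : q = 2 * α * pcrit α / (1 - α + 2 * α * pcrit α) := rfl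
  have hq0 : 0 < q := by rw [hqv]; positivity
  have hqlt : q < 1 := by
    rw [hqv, div_lt_one hAB]
    linarith
  set r : ℝ := 1 - q with hrdef
  have hr0 : 0 ≤ r := by rw [hrdef]; linarith
  have hr1 : r < 1 := by rw [hrdef]; linarith
  have hgeom : HasSum (fun n : ℕ => (n:ℝ) * r^n) (r/(1-r)^2) :=
    hasSum_coe_mul_geometric_of_norm_lt_one (by rwa [Real.norm_eq_abs, abs_of_nonneg hr0])
  have part2 : HasSum (fun m : ℕ => (m : ℝ) * (q * (1 - q) ^ m))
      ((1 - α) / (2 * α * pcrit α)) := by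
    have h := hgeom.mul_left q
    have heq : (fun m : ℕ => (m : ℝ) * (q * (1 - q) ^ m)) = fun n : ℕ => q * ((n:ℝ) * r^n) := by
      funext n
      rw [← hrdef]
      ring
    rw [heq]
    rw [show (1-α)/(2*α*pcrit α) = q * (r/(1-r)^2) from ?_]
    · exact h
    have h1r : 1 - r = q := by rw [hrdef]; ring
    rw [h1r, hrdef, hqv]
    field_simp
    ring
  refine ⟨part1, part2, ?_⟩
  rw [part1.tsum_eq, part2.tsum_eq]
  field_simp
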